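/- Let φ be a real-valued, twice continuously differentiable function on [a, b] such that φ'(t) ≠ 0 for all t ∈ [a, b] and φ' is monotone on [a, b]. Then |∫_a^b e^{iφ(t)} dt| ≤ 2 / min(|φ'(a)|, |φ'(b)|). -/

import Mathlib

open MeasureTheory Filter Set intervalIntegral
open scoped Real Topology

private lemma ofReal_comp_hasDerivWithinAt {f : ℝ → ℝ} {f' x : ℝ} {s : Set ℝ}
    (hf : HasDerivWithinAt f f' s x) :
    HasDerivWithinAt (fun t => (f t : ℂ)) (f' : ℂ) s x := by
  exact hf.ofReal_comp

private lemma deriv_nonneg_of_monotoneOn {a b : ℝ} (hab : a < b) {ψ : ℝ → ℝ} {c t : ℝ}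
    (ht : t ∈ Set.Icc a b) (hm : MonotoneOn ψ (Set.Icc a b))
    (hd : HasDerivWithinAt ψ c (Set.Icc a b) t) : 0 ≤ c := by
  rw [hasDerivWithinAt_iff_tendsto_slope] at hd
  rcases lt_or_eq_of_le ht.2 with h | h
  · -- t < b, use Ioo t b
    have hsub : Set.Ioo t b ⊆ Set.Icc a b \ {t} := fun x hx =>
      ⟨⟨ht.1.trans hx.1.le, hx.2.le⟩, ne_of_gt hx.1⟩
    have hne : (𝓝[Set.Ioo t b] t).NeBot := left_nhdsWithin_Ioo_neBot h
    have hd' := hd.mono_left (nhdsWithin_mono _ hsub)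
    refine ge_of_tendsto hd' ?_
    filter_upwards [self_mem_nhdsWithin] with x hx
    have h1 : ψ t ≤ ψ x := hm ht ⟨ht.1.trans hx.1.le, hx.2.le⟩ hx.1.le
    have h2 : (0:ℝ) < x - t := sub_pos.mpr hx.1
    simpa [slope_def_field, div_eq_mul_inv] using div_nonneg (sub_nonneg.mpr h1) h2.le
  · -- t = b, use Ioo a b
    subst h
    have hsub : Set.Ioo a t ⊆ Set.Icc a t \ {t} := fun x hx =>
      ⟨⟨hx.1.le, hx.2.le⟩, ne_of_lt hx.2⟩
    have hne : (𝓝[Set.Ioo a t] t).NeBot := right_nhdsWithin_Ioo_neBot hab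
    have hd' := hd.mono_left (nhdsWithin_mono _ hsub)
    refine ge_of_tendsto hd' ?_
    filter_upwards [self_mem_nhdsWithin] with x hx
    have h1 : ψ x ≤ ψ t := hm ⟨hx.1.le, hx.2.le⟩ ht hx.2.le
    have h2 : x - t < 0 := sub_neg.mpr hx.2
    have : slope ψ t x = (ψ x - ψ t) / (x - t) := by simp [slope_def_field]
    rw [this]
    exact div_nonneg_iff.mpr (Or.inr ⟨sub_nonpos.mpr h1, h2.le⟩)

private lemma inv_sum_abs_eq {x y : ℝ} (hx : 0 < x) (hy : 0 < y) :
    y⁻¹ + x⁻¹ + |x⁻¹ - y⁻¹| = 2 / min x y := by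
  rcases le_total x y with h | h
  · rw [min_eq_left h, abs_of_nonneg (sub_nonneg.mpr (inv_anti₀ hx h)),
      div_eq_mul_inv]
    ring
  · rw [min_eq_right h, abs_of_nonpos (sub_nonpos.mpr (inv_anti₀ hy h)),
      div_eq_mul_inv]
    ring

theorem abs_integral_exp_le_two_div_min
    (a b : ℝ) (hab : a < b) (φ : ℝ → ℝ)
    (hreg : ContDiffOn ℝ 2 φ (Set.Icc a b))
    (hne : ∀ t ∈ Set.Icc a b, derivWithin φ (Set.Icc a b) t ≠ 0)
    (hmono : MonotoneOn (derivWithin φ (Set.Icc a b)) (Set.Icc a b) ∨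
      AntitoneOn (derivWithin φ (Set.Icc a b)) (Set.Icc a b)) :
    ‖∫ t in a..b, Complex.exp (Complex.I * (φ t : ℂ))‖ ≤
      2 / min |derivWithin φ (Set.Icc a b) a| |derivWithin φ (Set.Icc a b) b| := by
  have huIcc : Set.uIcc a b = Set.Icc a b := Set.uIcc_of_le hab.le
  set ψ : ℝ → ℝ := derivWithin φ (Set.Icc a b) with hψdef
  set ψ' : ℝ → ℝ := derivWithin ψ (Set.Icc a b) with hψ'def
  have huniq : UniqueDiffOn ℝ (Set.Icc a b) := uniqueDiffOn_Icc hab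
  have hψ1 : ContDiffOn ℝ 1 ψ (Set.Icc a b) := hreg.derivWithin (m := 1) huniq (by norm_num)
  have hψcont : ContinuousOn ψ (Set.Icc a b) := hψ1.continuousOn
  have hψ'cont : ContinuousOn ψ' (Set.Icc a b) :=
    (hψ1.derivWithin (m := 0) huniq (by norm_num)).continuousOn
  have hψd : ∀ t ∈ Set.Icc a b, HasDerivWithinAt ψ (ψ' t) (Set.Icc a b) t := fun t ht =>
    ((hψ1.differentiableOn one_ne_zero) t ht).hasDerivWithinAt
  have hφd : ∀ t ∈ Set.Icc a b, HasDerivWithinAt φ (ψ t) (Set.Icc a b) t := fun t ht =>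
    ((hreg.differentiableOn two_ne_zero) t ht).hasDerivWithinAt
  have ha : a ∈ Set.Icc a b := Set.left_mem_Icc.mpr hab.le
  have hb : b ∈ Set.Icc a b := Set.right_mem_Icc.mpr hab.le
  have hIne : ∀ t ∈ Set.Icc a b, (Complex.I * (ψ t : ℂ)) ≠ 0 := fun t ht =>
    mul_ne_zero Complex.I_ne_zero (by exact_mod_cast hne t ht)
  -- sign constancy of ψ
  have hsg : (0 < ψ a ∧ 0 < ψ b) ∨ (ψ a < 0 ∧ ψ b < 0) := by
    have key : ∀ s t, s ∈ Set.Icc a b → t ∈ Set.Icc a b → ψ s < 0 → 0 < ψ t → False := by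
      intro s t hs ht h1 h2
      have hsub : Set.uIcc s t ⊆ Set.Icc a b := Set.uIcc_subset_Icc hs ht
      obtain ⟨u, hu, hu0⟩ := intermediate_value_uIcc (hψcont.mono hsub)
        (Set.mem_uIcc.mpr (Or.inl ⟨h1.le, h2.le⟩))
      exact hne u (hsub hu) hu0
    rcases lt_or_gt_of_ne (hne a ha) with h1 | h1 <;>
      rcases lt_or_gt_of_ne (hne b hb) with h2 | h2
    · exact Or.inr ⟨h1, h2⟩
    · exact (key a b ha hb h1 h2).elim
    · exact (key b a hb ha h2 h1).elim
    · exact Or.inl ⟨h1, h2⟩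
  -- the integrand functions for integration by parts
  set u : ℝ → ℂ := fun t => (Complex.I * (ψ t : ℂ))⁻¹ with hu_def
  set v : ℝ → ℂ := fun t => Complex.exp (Complex.I * (φ t : ℂ)) with hv_def
  set F : ℝ → ℂ := fun t => -(Complex.I * (ψ' t : ℂ)) / (Complex.I * (ψ t : ℂ)) ^ 2 with hF_def
  set G : ℝ → ℂ := fun t => Complex.exp (Complex.I * (φ t : ℂ)) * (Complex.I * (ψ t : ℂ))
    with hG_def
  have hud : ∀ x ∈ Set.Icc a b, HasDerivWithinAt u (F x) (Set.Icc a b) x := by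
    intro x hx
    have h1 : HasDerivWithinAt (fun t => Complex.I * (ψ t : ℂ)) (Complex.I * (ψ' x : ℂ))
        (Set.Icc a b) x := (ofReal_comp_hasDerivWithinAt (hψd x hx)).const_mul Complex.I
    have h0 : HasDerivWithinAt (fun _ : ℝ => (1:ℂ)) 0 (Set.Icc a b) x :=
      hasDerivWithinAt_const x _ 1
    have h2 := h0.div h1 (hIne x hx)
    simpa [hu_def, hF_def, one_div, neg_div, Pi.div_def] using h2
  have hvd : ∀ x ∈ Set.Icc a b, HasDerivWithinAt v (G x) (Set.Icc a b) x := by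
    intro x hx
    have h1 : HasDerivWithinAt (fun t => Complex.I * (φ t : ℂ)) (Complex.I * (ψ x : ℂ))
        (Set.Icc a b) x := (ofReal_comp_hasDerivWithinAt (hφd x hx)).const_mul Complex.I
    exact h1.cexp
  have hcIψ : ContinuousOn (fun t => Complex.I * (ψ t : ℂ)) (Set.Icc a b) :=
    continuous_const.continuousOn.mul (Complex.continuous_ofReal.comp_continuousOn hψcont)
  have hFcont : ContinuousOn F (Set.Icc a b) :=
    ((continuous_const.continuousOn.mul
      (Complex.continuous_ofReal.comp_continuousOn hψ'cont)).neg).div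
      (hcIψ.pow 2) (fun x hx => pow_ne_zero 2 (hIne x hx))
  have hGcont : ContinuousOn G (Set.Icc a b) :=
    ((continuous_const.continuousOn.mul
      (Complex.continuous_ofReal.comp_continuousOn hreg.continuousOn)).cexp).mul hcIψ
  have hFint : IntervalIntegrable F volume a b :=
    ContinuousOn.intervalIntegrable (by rw [huIcc]; exact hFcont)
  have hGint : IntervalIntegrable G volume a b :=
    ContinuousOn.intervalIntegrable (by rw [huIcc]; exact hGcont)
  have hud' : ∀ x ∈ Set.uIcc a b, HasDerivWithinAt u (F x) (Set.uIcc a b) x := by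
    rw [huIcc]; exact hud
  have hvd' : ∀ x ∈ Set.uIcc a b, HasDerivWithinAt v (G x) (Set.uIcc a b) x := by
    rw [huIcc]; exact hvd
  have hibp := intervalIntegral.integral_mul_deriv_eq_deriv_mul_of_hasDerivWithinAt
    hud' hvd' hFint hGint
  have heq : (∫ t in a..b, Complex.exp (Complex.I * (φ t : ℂ))) = ∫ t in a..b, u t * G t := by
    refine intervalIntegral.integral_congr fun t ht => ?_
    rw [huIcc] at ht
    show Complex.exp _ = (Complex.I * (ψ t : ℂ))⁻¹ * (Complex.exp _ * (Complex.I * (ψ t : ℂ)))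
    rw [mul_comm (Complex.exp _), ← mul_assoc, inv_mul_cancel₀ (hIne t ht), one_mul]
  -- the FTC computation
  have hftc : (∫ t in a..b, ψ' t / ψ t ^ 2) = (ψ a)⁻¹ - (ψ b)⁻¹ := by
    have hw : ∀ t ∈ Set.Icc a b,
        HasDerivWithinAt (fun t => -(ψ t)⁻¹) (ψ' t / ψ t ^ 2) (Set.Icc a b) t := by
      intro t ht
      have := ((hψd t ht).inv (hne t ht)).neg
      simpa [neg_div, Pi.neg_def, Pi.inv_def] using this
    have hwc : ContinuousOn (fun t => -(ψ t)⁻¹) (Set.Icc a b) := (hψcont.inv₀ hne).neg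
    have hint : IntervalIntegrable (fun t => ψ' t / ψ t ^ 2) volume a b := by
      refine ContinuousOn.intervalIntegrable ?_
      rw [huIcc]
      exact hψ'cont.div (hψcont.pow 2) (fun x hx => pow_ne_zero 2 (hne x hx))
    have := intervalIntegral.integral_eq_sub_of_hasDeriv_right_of_le hab.le hwc
      (fun x hx => (((hw x ⟨hx.1.le, hx.2.le⟩).hasDerivAt
        (Icc_mem_nhds hx.1 hx.2)).hasDerivWithinAt)) hint
    rw [this]; ring
  -- bound for the integral of |F|
  have habsFv : ∀ t ∈ Set.Icc a b, ‖F t * v t‖ = |ψ' t| / ψ t ^ 2 := by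
    intro t ht
    rw [norm_mul]
    have h1 : ‖F t‖ = |ψ' t| / ψ t ^ 2 := by
      rw [hF_def]
      rw [norm_div, norm_neg, norm_mul, norm_pow, norm_mul]
      simp only [Complex.norm_I, Complex.norm_real, Real.norm_eq_abs, one_mul]
      rw [sq_abs]
    have h2 : ‖v t‖ = 1 := by
      rw [hv_def]
      simp [Complex.norm_exp]
    rw [h1, h2, mul_one]
  have hDbound : (∫ t in a..b, ‖F t * v t‖) ≤ |(ψ a)⁻¹ - (ψ b)⁻¹| := by
    rcases hmono with hm | hm
    · have hsgn : ∀ t ∈ Set.Icc a b, 0 ≤ ψ' t := fun t ht =>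
        deriv_nonneg_of_monotoneOn hab ht hm (hψd t ht)
      have : (∫ t in a..b, ‖F t * v t‖) = ∫ t in a..b, ψ' t / ψ t ^ 2 := by
        refine intervalIntegral.integral_congr fun t ht => ?_
        rw [huIcc] at ht
        rw [habsFv t ht, abs_of_nonneg (hsgn t ht)]
      rw [this, hftc]
      exact le_abs_self _
    · have hsgn : ∀ t ∈ Set.Icc a b, ψ' t ≤ 0 := by
        intro t ht
        have h := deriv_nonneg_of_monotoneOn hab ht hm.neg ((hψd t ht).neg)
        linarith
      have : (∫ t in a..b, ‖F t * v t‖) = ∫ t in a..b, -(ψ' t / ψ t ^ 2) := by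
        refine intervalIntegral.integral_congr fun t ht => ?_
        rw [huIcc] at ht
        rw [habsFv t ht, abs_of_nonpos (hsgn t ht), neg_div]
      rw [this, intervalIntegral.integral_neg, hftc]
      exact neg_le_abs _
  -- putting it all together
  have habs_ub : ‖u b * v b‖ = |ψ b|⁻¹ := by
    rw [norm_mul]
    have h2 : ‖v b‖ = 1 := by rw [hv_def]; simp [Complex.norm_exp]
    rw [h2, mul_one, hu_def]
    simp [Complex.norm_I]
  have habs_ua : ‖u a * v a‖ = |ψ a|⁻¹ := by
    rw [norm_mul]
    have h2 : ‖v a‖ = 1 := by rw [hv_def]; simp [Complex.norm_exp]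
    rw [h2, mul_one, hu_def]
    simp [Complex.norm_I]
  have hmain : ‖∫ t in a..b, Complex.exp (Complex.I * (φ t : ℂ))‖ ≤
      |ψ b|⁻¹ + |ψ a|⁻¹ + |(ψ a)⁻¹ - (ψ b)⁻¹| := by
    rw [heq, hibp]
    calc ‖u b * v b - u a * v a - ∫ t in a..b, F t * v t‖
        ≤ ‖u b * v b‖ + ‖u a * v a‖ + ‖∫ t in a..b, F t * v t‖ :=
          (norm_sub_le _ _).trans (add_le_add_left (norm_sub_le _ _) _)
      _ ≤ |ψ b|⁻¹ + |ψ a|⁻¹ + |(ψ a)⁻¹ - (ψ b)⁻¹| := by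
          rw [habs_ub, habs_ua]
          refine add_le_add_right ?_ _
          exact (intervalIntegral.norm_integral_le_integral_norm hab.le).trans hDbound
  refine hmain.trans (le_of_eq ?_)
  -- final algebra
  rcases hsg with ⟨h1, h2⟩ | ⟨h1, h2⟩
  · rw [abs_of_pos h1, abs_of_pos h2]
    exact inv_sum_abs_eq h1 h2
  · rw [abs_of_neg h1, abs_of_neg h2]
    have hrw : (ψ a)⁻¹ - (ψ b)⁻¹ = -((-ψ a)⁻¹ - (-ψ b)⁻¹) := by
      rw [inv_neg, inv_neg]; ring
    rw [hrw, abs_neg]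
    exact inv_sum_abs_eq (by linarith) (by linarith)
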